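/- For non-negative integers d, f and any integer i, one has (i-1)^{\underline{d}} · i^{\overline{f}} = [ (i-1)^{\underline{d}} · i^{\overline{f+1}} − (i-2)^{\underline{d}} · (i-1)^{\overline{f+1}} ] / (f+d+1). -/

import Mathlib

/-- Rising factorial `x^{\overline{k}} = x(x+1)⋯(x+k-1)`. -/
noncomputable def risingFac (x : ℝ) (k : ℕ) : ℝ := ∏ j ∈ Finset.range k, (x + j)

/-- Falling factorial `x^{\underline{k}} = x(x-1)⋯(x-k+1)`. -/
noncomputable def fallingFac (x : ℝ) (k : ℕ) : ℝ := ∏ j ∈ Finset.range k, (x - j)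

lemma risingFac_succ (x : ℝ) (k : ℕ) : risingFac x (k + 1) = risingFac x k * (x + k) := by
  simp [risingFac, Finset.prod_range_succ]

lemma risingFac_succ' (x : ℝ) (k : ℕ) : risingFac x (k + 1) = x * risingFac (x + 1) k := by
  rw [risingFac, risingFac, Finset.prod_range_succ']
  have h : ∀ j ∈ Finset.range k, x + ((j : ℕ) + 1 : ℕ) = (x + 1) + (j : ℝ) := by
    intro j _; push_cast; ring
  rw [Finset.prod_congr rfl h]
  push_cast; ring

lemma fallingFac_shift (x : ℝ) (d : ℕ) :
    fallingFac x d * (x - d) = x * fallingFac (x - 1) d := by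
  have h1 : fallingFac x (d + 1) = fallingFac x d * (x - d) := by
    simp [fallingFac, Finset.prod_range_succ]
  have h2 : fallingFac x (d + 1) = x * fallingFac (x - 1) d := by
    rw [fallingFac, fallingFac, Finset.prod_range_succ']
    have h : ∀ j ∈ Finset.range d, x - ((j : ℕ) + 1 : ℕ) = (x - 1) - (j : ℝ) := by
      intro j _; push_cast; ring
    rw [Finset.prod_congr rfl h]
    push_cast; ring
  rw [← h1, h2]

theorem stmt_1 (d f : ℕ) (i : ℤ) :
    fallingFac ((i : ℝ) - 1) d * risingFac (i : ℝ) f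
      = (fallingFac ((i : ℝ) - 1) d * risingFac (i : ℝ) (f + 1)
          - fallingFac ((i : ℝ) - 2) d * risingFac ((i : ℝ) - 1) (f + 1))
        / ((f : ℝ) + d + 1) := by
  have hne : (f : ℝ) + d + 1 ≠ 0 := by positivity
  rw [risingFac_succ, risingFac_succ']
  have h1 : ((i : ℝ) - 1) + 1 = (i : ℝ) := by ring
  rw [h1]
  have hs := fallingFac_shift ((i : ℝ) - 1) d
  have h2 : (i : ℝ) - 1 - 1 = (i : ℝ) - 2 := by ring
  rw [h2] at hs
  field_simp
  linear_combination (-risingFac (i : ℝ) f) * hs
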